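/- arXiv:1108.1444 — 2 statements merged into one kernel-verified Lean document; each statement's English description precedes it below -/
import Mathlib

section
/- Consider the holomorphic curve C = {(t, eᵗ) : t ∈ ℂ*} ⊆ (ℂ*)². Its amoeba Log(C) = {(log|t|, Re t) : t ∈ ℂ*} equals the set {(x, y) ∈ ℝ² : -eˣ ≤ y ≤ eˣ} minus possibly a measure-zero set; in particular, Log(C) has infinite Lebesgue area in ℝ². -/
open Complex MeasureTheory

theorem stmt6 :
    let S : Set (ℝ × ℝ) :=
      {p | ∃ t : ℂ, t ≠ 0 ∧ p = (Real.log ‖t‖, t.re)}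
    let R : Set (ℝ × ℝ) := {p | -Real.exp p.1 ≤ p.2 ∧ p.2 ≤ Real.exp p.1}
    S ⊆ R ∧ volume (R \ S) = 0 ∧ volume S = ⊤ := by
  intro S R
  have hSR : S ⊆ R := by
    rintro p ⟨t, ht, rfl⟩
    have h1 : |t.re| ≤ ‖t‖ := Complex.abs_re_le_norm t
    have h2 : Real.exp (Real.log ‖t‖) = ‖t‖ :=
      Real.exp_log (norm_pos_iff.mpr ht)
    constructor
    · simp only
      rw [h2]
      linarith [abs_le.mp h1 |>.1]
    · simp only
      rw [h2]
      linarith [abs_le.mp h1 |>.2]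
  have hRS : R ⊆ S := by
    rintro ⟨x, y⟩ ⟨h1, h2⟩
    simp only at h1 h2
    set b : ℝ := Real.sqrt (Real.exp x * Real.exp x - y * y) with hb
    have hnn : 0 ≤ Real.exp x * Real.exp x - y * y := by nlinarith
    have habs : ‖(⟨y, b⟩ : ℂ)‖ = Real.exp x := by
      rw [Complex.norm_def, Complex.normSq_mk, hb, Real.mul_self_sqrt hnn]
      have : y * y + (Real.exp x * Real.exp x - y * y) = Real.exp x * Real.exp x := by ring
      rw [this, Real.sqrt_mul_self (Real.exp_nonneg x)]
    refine ⟨⟨y, b⟩, ?_, ?_⟩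
    · intro h
      rw [h] at habs
      simp at habs
      exact (Real.exp_pos x).ne' habs.symm
    · rw [habs, Real.log_exp]
  have hSeqR : S = R := le_antisymm hSR hRS
  refine ⟨hSR, ?_, ?_⟩
  · rw [hSeqR, Set.diff_self]
    simp
  · rw [hSeqR]
    have hsub : (Set.Ici (0:ℝ)) ×ˢ (Set.Icc (0:ℝ) 1) ⊆ R := by
      rintro ⟨x, y⟩ ⟨hx, hy⟩
      simp only [Set.mem_Ici, Set.mem_Icc] at hx hy
      have hex : (1:ℝ) ≤ Real.exp x := Real.one_le_exp hx
      exact ⟨by linarith [hy.1], by linarith [hy.2]⟩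
    have hvol : volume ((Set.Ici (0:ℝ)) ×ˢ (Set.Icc (0:ℝ) 1)) = ⊤ := by
      rw [Measure.volume_eq_prod, Measure.prod_prod, Real.volume_Ici, Real.volume_Icc]
      simp
    exact top_le_iff.mp (hvol ▸ measure_mono hsub)
end

section
/- Let ρ : ℂ* → (ℂ*)^{2+m} be ρ(t) = (t, 1+t, b₂ + a₂t, …, b_{1+m} + a_{1+m}t) with all aⱼ, bⱼ ∈ ℂ* and with bⱼ + aⱼt ≠ 0 on the domain. If for some non-real t ∈ ℂ* one has |ρ(t)ⱼ| = |ρ(t̄)ⱼ| for every coordinate j, then aⱼ/bⱼ ∈ ℝ* for every j = 2, …, 1+m; i.e., the line is real up to coordinatewise scaling. -/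
open Complex

theorem stmt12 (m : ℕ) (a b : Fin m → ℂ)
    (ha : ∀ j, a j ≠ 0) (hb : ∀ j, b j ≠ 0)
    (t : ℂ) (ht0 : t ≠ 0) (ht : t.im ≠ 0)
    (hdom : ∀ j, b j + a j * t ≠ 0)
    (h : ∀ j, ‖b j + a j * t‖ = ‖b j + a j * (starRingEnd ℂ) t‖) :
    ∀ j, ∃ r : ℝ, r ≠ 0 ∧ a j / b j = (r : ℂ) := by
  intro j
  have hn : Complex.normSq (b j + a j * t) = Complex.normSq (b j + a j * (starRingEnd ℂ) t) := by
    rw [← Complex.sq_norm, ← Complex.sq_norm, h j]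
  simp only [Complex.normSq_apply, Complex.add_re, Complex.add_im, Complex.mul_re,
    Complex.mul_im, Complex.conj_re, Complex.conj_im] at hn
  have key : (b j).re * (a j).im - (b j).im * (a j).re = 0 := by
    have h2 : ((b j).re * (a j).im - (b j).im * (a j).re) * t.im = 0 := by nlinarith [hn]
    rcases mul_eq_zero.mp h2 with h3 | h3
    · exact h3
    · exact absurd h3 ht
  have hB : Complex.normSq (b j) ≠ 0 := (Complex.normSq_pos.mpr (hb j)).ne'
  have him : (a j / b j).im = 0 := by
    rw [Complex.div_im]
    field_simp
    linarith [key]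
  refine ⟨(a j / b j).re, ?_, ?_⟩
  · intro h0
    have : a j / b j = 0 := Complex.ext h0 him
    exact (div_ne_zero (ha j) (hb j)) this
  · exact Complex.ext (by simp) (by simp [him])
end
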